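/- Given a nonempty target set A ⊆ X and a state x ∉ A, the initial cycle C_A(x) := {x} ∪ {z ∈ X : Φ(x,z) < Φ(x,A)} is a cycle of the energy landscape, and it is disjoint from A. Moreover, the collection {C_A(x)}_{x ∈ X∖A} forms the partition of X∖A into maximal cycles contained in X∖A. -/

import Mathlib

/- Abstract energy landscape: finite state space `X`, energy `H`, connectivity `q`. -/

variable {X : Type*}

/-- A path from `x` to `y`: a nonempty finite sequence of states with consecutive
states connected by `q`. -/
def IsPath (q : X → X → Prop) (ω : List X) (x y : X) : Prop :=
  ω ≠ [] ∧ ω.Chain' q ∧ ω.head? = some x ∧ ω.getLast? = some y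

/-- The elevation (height) of a path: the maximal energy along it. -/
noncomputable def elev (H : X → ℝ) (ω : List X) : ℝ :=
  sSup (H '' {z | z ∈ ω})

/-- The communication energy between two states: the minimal elevation over paths. -/
noncomputable def commE (H : X → ℝ) (q : X → X → Prop) (x y : X) : ℝ :=
  sInf {e | ∃ ω, IsPath q ω x y ∧ elev H ω = e}

/-- The communication energy between two sets of states. -/
noncomputable def commSet (H : X → ℝ) (q : X → X → Prop) (A B : Set X) : ℝ :=
  sInf {e | ∃ x ∈ A, ∃ y ∈ B, commE H q x y = e}

/-- A set of states is connected if any two of its states are joined by a path inside it. -/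
def SetConn (q : X → X → Prop) (C : Set X) : Prop :=
  ∀ x ∈ C, ∀ y ∈ C, ∃ ω, IsPath q ω x y ∧ ∀ z ∈ ω, z ∈ C

/-- The external boundary of a set of states. -/
def extBdry (q : X → X → Prop) (C : Set X) : Set X :=
  {y | y ∉ C ∧ ∃ x ∈ C, q x y}

/-- A non-trivial cycle: a connected set whose maximal internal energy is strictly
below the minimal energy on its external boundary. -/
def IsNontrivialCycle (H : X → ℝ) (q : X → X → Prop) (C : Set X) : Prop :=
  C.Nonempty ∧ SetConn q C ∧ sSup (H '' C) < sInf (H '' extBdry q C)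

/-- A cycle: a singleton, or a non-trivial cycle. -/
def IsCycle (H : X → ℝ) (q : X → X → Prop) (C : Set X) : Prop :=
  (∃ x, C = {x}) ∨ IsNontrivialCycle H q C

/-- The communication energy between a state and a set of states. -/
noncomputable def commA (H : X → ℝ) (q : X → X → Prop) (x : X) (A : Set X) : ℝ :=
  sInf {e | ∃ y ∈ A, commE H q x y = e}

/-- The initial cycle `C_A(x) = {x} ∪ {z : Φ(x,z) < Φ(x,A)}`. -/
def initCycle (H : X → ℝ) (q : X → X → Prop) (A : Set X) (x : X) : Set X :=
  {x} ∪ {z | commE H q x z < commA H q x A}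

/-- `C` is a maximal cycle contained in `B`. -/
def MaxCycleIn (H : X → ℝ) (q : X → X → Prop) (B C : Set X) : Prop :=
  IsCycle H q C ∧ C ⊆ B ∧ ∀ C', IsCycle H q C' → C' ⊆ B → C ⊆ C' → C' = C
set_option linter.unusedSectionVars false
section Helpers
variable [Fintype X] {H : X → ℝ} {q : X → X → Prop}

lemma le_elev {ω : List X} {z : X} (hz : z ∈ ω) : H z ≤ elev H ω :=
  le_csSup (Set.toFinite _).bddAbove ⟨z, hz, rfl⟩

lemma elev_attained {ω : List X} (hω : ω ≠ []) : ∃ z ∈ ω, elev H ω = H z := by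
  have hne : (H '' {z | z ∈ ω}).Nonempty := by
    obtain ⟨a, ha⟩ := List.exists_mem_of_ne_nil ω hω
    exact ⟨H a, a, ha, rfl⟩
  obtain ⟨z, hz, he⟩ := hne.csSup_mem (Set.toFinite _)
  exact ⟨z, hz, he.symm⟩

lemma pathElevs_finite (x y : X) :
    {e | ∃ ω, IsPath q ω x y ∧ elev H ω = e}.Finite := by
  apply Set.Finite.subset (Set.finite_range (fun S : Set X => sSup (H '' S)))
  rintro e ⟨ω, _, rfl⟩
  exact ⟨{z | z ∈ ω}, rfl⟩

lemma pathElevs_nonempty (hirr : ∀ x y : X, ∃ ω, IsPath q ω x y) (x y : X) :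
    {e | ∃ ω, IsPath q ω x y ∧ elev H ω = e}.Nonempty := by
  obtain ⟨ω, hω⟩ := hirr x y
  exact ⟨elev H ω, ω, hω, rfl⟩

lemma commE_le {ω : List X} {x y : X} (h : IsPath q ω x y) :
    commE H q x y ≤ elev H ω :=
  csInf_le (pathElevs_finite x y).bddBelow ⟨ω, h, rfl⟩

lemma commE_attained (hirr : ∀ x y : X, ∃ ω, IsPath q ω x y) (x y : X) :
    ∃ ω, IsPath q ω x y ∧ elev H ω = commE H q x y := by
  have h := (pathElevs_nonempty (H := H) hirr x y).csInf_mem (pathElevs_finite x y)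
  exact h

lemma le_commE (hirr : ∀ x y : X, ∃ ω, IsPath q ω x y) {x y : X} {c : ℝ}
    (h : ∀ ω, IsPath q ω x y → c ≤ elev H ω) : c ≤ commE H q x y :=
  le_csInf (pathElevs_nonempty hirr x y) (by rintro e ⟨ω, hω, rfl⟩; exact h ω hω)


lemma head_mem {ω : List X} {x y : X} (h : IsPath q ω x y) : x ∈ ω := by
  obtain ⟨_, _, hh, _⟩ := h
  exact List.mem_of_mem_head? hh

lemma last_mem {ω : List X} {x y : X} (h : IsPath q ω x y) : y ∈ ω := by
  obtain ⟨_, _, _, hl⟩ := h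
  exact List.mem_of_mem_getLast? hl

lemma path_singleton (x : X) : IsPath q [x] x x :=
  ⟨by simp, List.isChain_singleton _, rfl, rfl⟩

lemma elev_singleton (x : X) : elev H [x] = H x := by
  have : {z | z ∈ [x]} = {x} := by ext z; simp
  rw [elev, this, Set.image_singleton, csSup_singleton]

lemma elev_le {ω : List X} {c : ℝ} (hω : ω ≠ []) (h : ∀ z ∈ ω, H z ≤ c) :
    elev H ω ≤ c := by
  apply csSup_le
  · obtain ⟨a, ha⟩ := List.exists_mem_of_ne_nil ω hω
    exact ⟨H a, a, ha, rfl⟩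
  · rintro e ⟨z, hz, rfl⟩; exact h z hz

lemma elev_mono {ω₁ ω₂ : List X} (h1 : ω₁ ≠ []) (hsub : ∀ z ∈ ω₁, z ∈ ω₂) :
    elev H ω₁ ≤ elev H ω₂ :=
  elev_le h1 (fun z hz => le_elev (hsub z hz))

lemma path_reverse (hsymm : ∀ x y, q x y → q y x) {ω : List X} {x y : X}
    (h : IsPath q ω x y) : IsPath q ω.reverse y x := by
  obtain ⟨hne, hch, hh, hl⟩ := h
  refine ⟨by simpa, ?_, ?_, ?_⟩
  · rw [show List.Chain' q ω.reverse ↔ List.IsChain q ω.reverse from Iff.rfl, List.isChain_reverse]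
    exact hch.imp (fun a b hab => hsymm a b hab)
  · rwa [List.head?_reverse]
  · rwa [List.getLast?_reverse]

lemma elev_reverse (ω : List X) : elev H ω.reverse = elev H ω := by
  have : {z | z ∈ ω.reverse} = {z | z ∈ ω} := by ext z; simp
  rw [elev, this]; rfl

lemma commE_symm (hsymm : ∀ x y, q x y → q y x) (x y : X) :
    commE H q x y = commE H q y x := by
  unfold commE
  congr 1
  ext e
  constructor <;> rintro ⟨ω, hω, rfl⟩ <;>
    exact ⟨ω.reverse, path_reverse hsymm hω, elev_reverse ω⟩

lemma path_append {ω₁ ω₂ : List X} {x y z : X}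
    (h1 : IsPath q ω₁ x y) (h2 : IsPath q ω₂ y z) :
    ∃ ω, IsPath q ω x z ∧ ∀ w ∈ ω, w ∈ ω₁ ∨ w ∈ ω₂ := by
  obtain ⟨hne1, hch1, hh1, hl1⟩ := h1
  obtain ⟨hne2, hch2, hh2, hl2⟩ := h2
  obtain ⟨b, t, rfl⟩ := List.exists_cons_of_ne_nil hne2
  have hb : b = y := by simpa using hh2
  subst hb
  refine ⟨ω₁ ++ t, ⟨by simp [hne1], ?_, ?_, ?_⟩, ?_⟩
  · apply hch1.append (List.isChain_cons.mp hch2).2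
    intro a ha c hc
    have : a = b := by rw [hl1] at ha; exact (Option.some_inj.mp ha).symm
    subst this
    exact (List.isChain_cons.mp hch2).1 c hc
  · cases ω₁ with
    | nil => exact absurd rfl hne1
    | cons a s => simpa using hh1
  · cases t with
    | nil =>
        simp only [List.append_nil]
        rw [hl1, show b = z by simpa using hl2]
    | cons c t' =>
        rw [List.getLast?_cons_cons] at hl2
        rw [List.getLast?_append, hl2]
        rfl
  · intro w hw
    rcases List.mem_append.mp hw with h | h
    · exact Or.inl h
    · exact Or.inr (List.mem_cons_of_mem _ h)


lemma commE_le_of_mem {ω : List X} {x y w : X} (h : IsPath q ω x y) (hw : w ∈ ω) :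
    commE H q x w ≤ elev H ω := by
  obtain ⟨hne, hch, hh, hl⟩ := h
  obtain ⟨l₁, l₂, rfl⟩ := List.append_of_mem hw
  have hp : IsPath q (l₁ ++ [w]) x w := by
    refine ⟨by simp, ?_, ?_, ?_⟩
    · apply hch.prefix
      exact ⟨l₂, by simp⟩
    · rw [List.head?_append] at hh ⊢
      cases hl1 : l₁.head? with
      | none => simpa [hl1] using hh
      | some a => simpa [hl1] using hh
    · exact List.getLast?_concat
  calc commE H q x w ≤ elev H (l₁ ++ [w]) := commE_le hp
    _ ≤ elev H (l₁ ++ w :: l₂) := elev_mono (by simp) (by intro u hu; simp at hu ⊢; tauto)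

lemma path_snoc {ω : List X} {x w y : X} (h : IsPath q ω x w) (hq : q w y) :
    IsPath q (ω ++ [y]) x y := by
  obtain ⟨hne, hch, hh, hl⟩ := h
  refine ⟨by simp, ?_, ?_, List.getLast?_concat⟩
  · apply hch.append (by simp)
    intro a ha c hc
    have ha' : a = w := by rw [hl] at ha; exact (Option.some_inj.mp ha).symm
    have hc' : c = y := (Option.some_inj.mp hc).symm
    subst ha'; subst hc'; exact hq
  · rw [List.head?_append]
    cases hl1 : ω.head? with
    | none => simpa [hl1] using hh
    | some a => simpa [hl1] using hh

lemma crossing (C : Set X) : ∀ ω : List X, List.Chain' q ω → ∀ x y : X,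
    ω.head? = some x → ω.getLast? = some y → x ∈ C → y ∉ C →
    ∃ b ∈ ω, b ∈ extBdry q C := by
  intro ω
  induction ω with
  | nil => intro _ x y hh; simp at hh
  | cons a t ih =>
    intro hch x y hh hl hx hy
    have hax : a = x := by simpa using hh
    subst hax
    cases t with
    | nil =>
      have : a = y := by simpa using hl
      subst this; exact absurd hx hy
    | cons b t' =>
      by_cases hb : b ∈ C
      · obtain ⟨c, hc1, hc2⟩ := ih (List.isChain_cons_cons.mp hch).2 b y rfl
          (by rw [← hl]; exact (List.getLast?_cons_cons).symm) hb hy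
        exact ⟨c, List.mem_cons_of_mem _ hc1, hc2⟩
      · exact ⟨b, by simp, hb, a, hx, (List.isChain_cons_cons.mp hch).1⟩


variable (hirr : ∀ x y : X, ∃ ω, IsPath q ω x y)
include hirr

lemma Hx_le_commE (x y : X) : H x ≤ commE H q x y :=
  le_commE hirr (fun ω hω => le_elev (head_mem hω))

lemma Hy_le_commE (x y : X) : H y ≤ commE H q x y :=
  le_commE hirr (fun ω hω => le_elev (last_mem hω))

lemma commE_self (x : X) : commE H q x x = H x :=
  le_antisymm (le_of_le_of_eq (commE_le (path_singleton x)) (elev_singleton x))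
    (Hx_le_commE hirr x x)

lemma commE_triangle (x y z : X) :
    commE H q x z ≤ max (commE H q x y) (commE H q y z) := by
  obtain ⟨ω₁, h1, he1⟩ := commE_attained hirr x y
  obtain ⟨ω₂, h2, he2⟩ := commE_attained hirr y z
  obtain ⟨ω, hω, hsub⟩ := path_append h1 h2
  calc commE H q x z ≤ elev H ω := commE_le hω
    _ ≤ max (commE H q x y) (commE H q y z) := by
        apply elev_le hω.1
        intro w hw
        rcases hsub w hw with h | h
        · exact le_max_of_le_left (he1 ▸ le_elev h)
        · exact le_max_of_le_right (he2 ▸ le_elev h)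

omit hirr

lemma commA_le {x y : X} {A : Set X} (hy : y ∈ A) : commA H q x A ≤ commE H q x y := by
  have hfin : {e | ∃ y ∈ A, commE H q x y = e}.Finite := by
    have h2 : {e | ∃ y ∈ A, commE H q x y = e} = commE H q x '' A := by
      ext e; simp [Set.mem_image, eq_comm]
    exact h2 ▸ (Set.toFinite _).image _
  exact csInf_le hfin.bddBelow ⟨y, hy, rfl⟩

lemma commA_attained {x : X} {A : Set X} (hA : A.Nonempty) :
    ∃ y ∈ A, commA H q x A = commE H q x y := by
  have hne : {e | ∃ y ∈ A, commE H q x y = e}.Nonempty :=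
    ⟨commE H q x hA.choose, hA.choose, hA.choose_spec, rfl⟩
  have hfin : {e | ∃ y ∈ A, commE H q x y = e}.Finite := by
    have : {e | ∃ y ∈ A, commE H q x y = e} = commE H q x '' A := by
      ext e; simp [Set.mem_image, eq_comm]
    exact this ▸ (Set.toFinite _).image _
  obtain ⟨y, hy, he⟩ := hne.csInf_mem hfin
  exact ⟨y, hy, he.symm⟩


lemma initCycle_disjoint {x : X} {A : Set X} (hxA : x ∉ A) :
    initCycle H q A x ∩ A = ∅ := by
  ext z
  simp only [Set.mem_inter_iff, Set.mem_empty_iff_false, iff_false, not_and]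
  rintro (rfl | hz) hzA
  · exact hxA hzA
  · exact absurd hz (not_lt.mpr (commA_le hzA))


lemma initCycle_isCycle (hsymm : ∀ x y, q x y → q y x)
    (hirr : ∀ x y : X, ∃ ω, IsPath q ω x y)
    {x : X} {A : Set X} (hA : A.Nonempty) (hxA : x ∉ A) :
    IsCycle H q (initCycle H q A x) := by
  set C := initCycle H q A x with hC
  by_cases hsing : C = {x}
  · exact Or.inl ⟨x, hsing⟩
  right
  have hxC : x ∈ C := Or.inl rfl
  -- there is z ∈ C with z ≠ x
  obtain ⟨z, hzC, hzx⟩ : ∃ z ∈ C, z ≠ x := by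
    by_contra hcon
    push_neg at hcon
    apply hsing
    ext w
    constructor
    · intro hw; exact hcon w hw
    · rintro rfl; exact hxC
  have hHx : H x < commA H q x A := by
    rcases hzC with rfl | hz
    · exact absurd rfl hzx
    · exact lt_of_le_of_lt (Hx_le_commE hirr x z) hz
  -- all members have small communication energy
  have M1 : ∀ w ∈ C, commE H q x w < commA H q x A := by
    rintro w (rfl | hw)
    · rwa [commE_self hirr]
    · exact hw
  -- internal connectivity from x
  have M2 : ∀ w ∈ C, ∃ ω, IsPath q ω x w ∧ ∀ u ∈ ω, u ∈ C := by
    intro w hw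
    obtain ⟨ω, hω, he⟩ := commE_attained hirr x w
    refine ⟨ω, hω, fun u hu => ?_⟩
    right
    calc commE H q x u ≤ elev H ω := commE_le_of_mem hω hu
      _ = commE H q x w := he
      _ < commA H q x A := M1 w hw
  -- boundary is nonempty
  obtain ⟨y0, hy0A⟩ := hA
  have hy0C : y0 ∉ C := by
    intro hy0
    have := initCycle_disjoint (H := H) (q := q) hxA
    rw [Set.eq_empty_iff_forall_notMem] at this
    exact this y0 ⟨hy0, hy0A⟩
  obtain ⟨ω0, hω0⟩ := hirr x y0
  obtain ⟨b0, _, hb0⟩ := crossing C ω0 hω0.2.1 x y0 hω0.2.2.1 hω0.2.2.2 hxC hy0C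
  -- boundary energies are large
  have M3 : ∀ y ∈ extBdry q C, commA H q x A ≤ H y := by
    rintro y ⟨hyC, w, hwC, hqwy⟩
    have hΦy : commA H q x A ≤ commE H q x y := by
      by_contra hcon
      exact hyC (Or.inr (not_le.mp hcon))
    obtain ⟨ωw, hωw, hew⟩ := commE_attained hirr x w
    have hpath : IsPath q (ωw ++ [y]) x y := path_snoc hωw hqwy
    have hbound : commE H q x y ≤ max (commE H q x w) (H y) := by
      refine le_trans (commE_le hpath) (elev_le hpath.1 ?_)
      intro u hu
      rcases List.mem_append.mp hu with h | h
      · exact le_max_of_le_left (hew ▸ le_elev h)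
      · exact le_max_of_le_right (by simp at h; rw [h])
    rcases le_max_iff.mp hbound with h | h
    · exact absurd hΦy (not_le.mpr (lt_of_le_of_lt h (M1 w hwC)))
    · exact le_trans hΦy h
  refine ⟨⟨x, hxC⟩, ?_, ?_⟩
  · -- connectivity
    intro w1 h1 w2 h2
    obtain ⟨ω1, hp1, hin1⟩ := M2 w1 h1
    obtain ⟨ω2, hp2, hin2⟩ := M2 w2 h2
    obtain ⟨ω, hp, hsub⟩ := path_append (path_reverse hsymm hp1) hp2
    refine ⟨ω, hp, fun u hu => ?_⟩
    rcases hsub u hu with h | h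
    · exact hin1 u (List.mem_reverse.mp h)
    · exact hin2 u h
  · -- energy barrier
    have hCfin : (H '' C).Finite := Set.toFinite _
    obtain ⟨w, hwC, hsup⟩ : ∃ w ∈ C, sSup (H '' C) = H w := by
      have hne : (H '' C).Nonempty := ⟨H x, x, hxC, rfl⟩
      obtain ⟨w, hw, hew⟩ := hne.csSup_mem hCfin
      exact ⟨w, hw, hew.symm⟩
    calc sSup (H '' C) = H w := hsup
      _ ≤ commE H q x w := Hy_le_commE hirr x w
      _ < commA H q x A := M1 w hwC
      _ ≤ sInf (H '' extBdry q C) :=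
          le_csInf ⟨H b0, b0, hb0, rfl⟩ (by rintro e ⟨y, hy, rfl⟩; exact M3 y hy)


lemma cycle_subset_initCycle (hirr : ∀ x y : X, ∃ ω, IsPath q ω x y)
    {x : X} {A C' : Set X} (hA : A.Nonempty) (hC' : IsCycle H q C')
    (hx : x ∈ C') (hsub : C' ⊆ Aᶜ) : C' ⊆ initCycle H q A x := by
  rcases hC' with ⟨w, rfl⟩ | ⟨hne, hconn, hlt⟩
  · intro z hz
    have h1 : x = w := by simpa using hx
    have h2 : z = w := by simpa using hz
    rw [h2, ← h1]
    exact Or.inl rfl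
  · -- boundary nonempty
    obtain ⟨y0, hy0A⟩ := hA
    have hy0C : y0 ∉ C' := fun h => hsub h hy0A
    obtain ⟨ω0, hω0⟩ := hirr x y0
    obtain ⟨b0, _, hb0⟩ := crossing C' ω0 hω0.2.1 x y0 hω0.2.2.1 hω0.2.2.2 hx hy0C
    -- commA is at least the boundary infimum
    have hΦA : sInf (H '' extBdry q C') ≤ commA H q x A := by
      obtain ⟨y1, hy1A, hy1⟩ := commA_attained (x := x) (H := H) (q := q) ⟨y0, hy0A⟩
      rw [hy1]
      apply le_commE hirr
      intro ω hω
      have hy1C : y1 ∉ C' := fun h => hsub h hy1A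
      obtain ⟨b, hbω, hb⟩ := crossing C' ω hω.2.1 x y1 hω.2.2.1 hω.2.2.2 hx hy1C
      calc sInf (H '' extBdry q C') ≤ H b :=
            csInf_le (Set.toFinite _).bddBelow ⟨b, hb, rfl⟩
        _ ≤ elev H ω := le_elev hbω
    intro z hz
    right
    obtain ⟨ω, hω, hωin⟩ := hconn x hx z hz
    obtain ⟨u, huω, hue⟩ := elev_attained hω.1
    calc commE H q x z ≤ elev H ω := commE_le hω
      _ = H u := hue
      _ ≤ sSup (H '' C') := le_csSup (Set.toFinite _).bddAbove ⟨u, hωin u huω, rfl⟩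
      _ < sInf (H '' extBdry q C') := hlt
      _ ≤ commA H q x A := hΦA

end Helpers

theorem initial_cycles_partition [Fintype X] (H : X → ℝ) (q : X → X → Prop)
    (hsymm : ∀ x y, q x y → q y x)
    (hirr : ∀ x y : X, ∃ ω, IsPath q ω x y)
    (A : Set X) (hA : A.Nonempty) :
    (∀ x ∉ A, IsCycle H q (initCycle H q A x) ∧ initCycle H q A x ∩ A = ∅) ∧
    {C : Set X | ∃ x ∉ A, C = initCycle H q A x} = {C : Set X | MaxCycleIn H q Aᶜ C} := by
  have hdisj : ∀ x ∉ A, initCycle H q A x ∩ A = ∅ :=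
    fun x hx => initCycle_disjoint hx
  have hsubC : ∀ x ∉ A, initCycle H q A x ⊆ Aᶜ := by
    intro x hx z hz hzA
    have := hdisj x hx
    rw [Set.eq_empty_iff_forall_notMem] at this
    exact this z ⟨hz, hzA⟩
  refine ⟨fun x hx => ⟨initCycle_isCycle hsymm hirr hA hx, hdisj x hx⟩, ?_⟩
  ext C
  simp only [Set.mem_setOf_eq]
  constructor
  · rintro ⟨x, hx, rfl⟩
    refine ⟨initCycle_isCycle hsymm hirr hA hx, hsubC x hx, ?_⟩
    intro C' hC' hC'sub hCC'
    have hxC' : x ∈ C' := hCC' (Or.inl rfl)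
    exact le_antisymm (cycle_subset_initCycle hirr hA hC' hxC' hC'sub) hCC'
  · rintro ⟨hcyc, hsub, hmax⟩
    have hCne : C.Nonempty := by
      rcases hcyc with ⟨w, rfl⟩ | ⟨hne, _, _⟩
      · exact ⟨w, rfl⟩
      · exact hne
    obtain ⟨x, hxC⟩ := hCne
    have hxA : x ∉ A := hsub hxC
    refine ⟨x, hxA, ?_⟩
    have h1 : C ⊆ initCycle H q A x := cycle_subset_initCycle hirr hA hcyc hxC hsub
    exact (hmax _ (initCycle_isCycle hsymm hirr hA hxA) (hsubC x hxA) h1).symm
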